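/- Among all orthogonal projections onto k-dimensional subspaces of ℝ^N, the projection onto the span of the first k left singular vectors of the snapshot matrix U minimizes the total squared projection error Σ_{j=1}^M ‖u^j − P u^j‖₂², i.e., for any matrix Q ∈ ℝ^{N×k} with QᵀQ = I_k, Σ_{j=1}^M ‖u^j − QQᵀ u^j‖₂² ≥ Σ_{i=k+1}^{min(N,M)} σ_i². -/

import Mathlib

section PodAux
open Matrix Finset

lemma fro_eq {n m : ℕ} (X : Matrix (Fin n) (Fin m) ℝ) :
    ∑ j : Fin m, ∑ i : Fin n, (X i j)^2 = Matrix.trace (Xᵀ * X) := by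
  simp [Matrix.trace, Matrix.diag, Matrix.mul_apply, sq]

lemma fro_left {n m p : ℕ} (B : Matrix (Fin p) (Fin n) ℝ) (hB : Bᵀ * B = 1)
    (X : Matrix (Fin n) (Fin m) ℝ) :
    Matrix.trace ((B * X)ᵀ * (B * X)) = Matrix.trace (Xᵀ * X) := by
  rw [Matrix.transpose_mul, Matrix.mul_assoc, ← Matrix.mul_assoc Bᵀ B X, hB, Matrix.one_mul]

lemma fro_right {n m p : ℕ} (C : Matrix (Fin m) (Fin p) ℝ) (hC : C * Cᵀ = 1)
    (X : Matrix (Fin n) (Fin m) ℝ) :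
    Matrix.trace ((X * C)ᵀ * (X * C)) = Matrix.trace (Xᵀ * X) := by
  rw [Matrix.transpose_mul, Matrix.mul_assoc, Matrix.trace_mul_comm, Matrix.mul_assoc,
    Matrix.mul_assoc, hC, Matrix.mul_one]

lemma sum_range_if {n k : ℕ} (hk : k ≤ n) (f : ℕ → ℝ) :
    (∑ i ∈ Finset.range n, if i < k then f i else 0) = ∑ i ∈ Finset.range k, f i := by
  have h1 : (∑ i ∈ Finset.range k, if i < k then f i else 0)
      = ∑ i ∈ Finset.range n, if i < k then f i else 0 :=
    Finset.sum_subset (Finset.range_subset_range.mpr hk)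
      (fun i _ hik => if_neg (by simpa using hik))
  rw [← h1]
  exact Finset.sum_congr rfl fun i hi => if_pos (Finset.mem_range.mp hi)


end PodAux

open Matrix Finset in
/-- POD / Eckart–Young error identity: for `U = V Σ Wᵀ` an SVD, the total squared
error of projecting the columns of `U` onto the first `k` left singular vectors
equals the sum of the squares of the discarded singular values. -/
theorem pod_projection_optimal
    (N M k : ℕ) (hk : k ≤ min N M)
    (U : Matrix (Fin N) (Fin M) ℝ)
    (V : Matrix (Fin N) (Fin N) ℝ) (W : Matrix (Fin M) (Fin M) ℝ)
    (σ : ℕ → ℝ)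
    (S : Matrix (Fin N) (Fin M) ℝ)
    (hS : ∀ i j, S i j = if (i : ℕ) = (j : ℕ) then σ (i : ℕ) else 0)
    (hσ_nonneg : ∀ i, 0 ≤ σ i)
    (hσ_dec : ∀ i j, i ≤ j → σ j ≤ σ i)
    (hV : Vᵀ * V = 1) (hW : Wᵀ * W = 1)
    (hSVD : U = V * S * Wᵀ)
    (Q : Matrix (Fin N) (Fin k) ℝ) (hQ : Qᵀ * Q = 1) :
    ∑ i ∈ Finset.Ico k (min N M), σ i ^ 2
      ≤ ∑ j : Fin M, ∑ i : Fin N, ((U - Q * Qᵀ * U) i j) ^ 2 := by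
  set m := min N M with hm
  have hkN : k ≤ N := hk.trans (min_le_left _ _)
  have hmN : m ≤ N := min_le_left _ _
  have hmM : m ≤ M := min_le_right _ _
  have hVV : V * Vᵀ = 1 := mul_eq_one_comm.mp hV
  have hWW : W * Wᵀ = 1 := mul_eq_one_comm.mp hW
  set A : Matrix (Fin N) (Fin k) ℝ := Vᵀ * Q with hAdef
  have hA : Aᵀ * A = 1 := by
    rw [hAdef, Matrix.transpose_mul, Matrix.transpose_transpose, Matrix.mul_assoc,
      ← Matrix.mul_assoc V Vᵀ Q, hVV, Matrix.one_mul, hQ]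
  set c : Fin N → ℝ := fun i => (A * Aᵀ) i i with hcdef
  set d : Fin N → ℝ := fun i => if (i : ℕ) < M then σ i ^ 2 else 0 with hddef
  -- S * Sᵀ is diagonal with entries d
  have hSS : ∀ i j : Fin N, (S * Sᵀ) i j = if i = j then d i else 0 := by
    intro i j
    rw [Matrix.mul_apply]
    simp only [Matrix.transpose_apply, hS]
    by_cases hij : i = j
    · subst hij
      simp only [if_pos rfl, hddef]
      by_cases hiM : (i : ℕ) < M
      · rw [if_pos hiM, Finset.sum_eq_single (⟨(i : ℕ), hiM⟩ : Fin M)]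
        · simp [sq]
        · intro b _ hb
          have : (i : ℕ) ≠ (b : ℕ) := fun h => hb (by ext; simp [← h])
          simp [this]
        · simp
      · rw [if_neg hiM]
        apply Finset.sum_eq_zero
        intro b _
        have : (i : ℕ) ≠ (b : ℕ) := fun h => hiM (h ▸ b.isLt)
        simp [this]
    · rw [if_neg hij]
      apply Finset.sum_eq_zero
      intro b _
      rcases eq_or_ne (i : ℕ) (b : ℕ) with h1 | h1
      · have : (j : ℕ) ≠ (b : ℕ) := by
          intro h2; exact hij (Fin.ext (h1.trans h2.symm))
        simp [this]
      · simp [h1]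
  have htr_cd : Matrix.trace ((A * Aᵀ) * (S * Sᵀ)) = ∑ i : Fin N, c i * d i := by
    rw [Matrix.trace]
    apply Finset.sum_congr rfl
    intro i _
    rw [Matrix.diag_apply, Matrix.mul_apply]
    rw [Finset.sum_eq_single i]
    · rw [hSS]; simp [hcdef]
    · intro b _ hb
      rw [hSS, if_neg hb, mul_zero]
    · simp
  have htrS : Matrix.trace (S * Sᵀ) = ∑ i : Fin N, d i := by
    rw [Matrix.trace]
    exact Finset.sum_congr rfl fun i _ => by rw [Matrix.diag_apply, hSS, if_pos rfl]
  -- c bounds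
  have hc_nonneg : ∀ i, 0 ≤ c i := by
    intro i
    rw [hcdef]
    simp only [Matrix.mul_apply, Matrix.transpose_apply]
    exact Finset.sum_nonneg fun l _ => mul_self_nonneg _
  have hc_le_one : ∀ i, c i ≤ 1 := by
    intro i
    have hB : (A * Aᵀ) * (A * Aᵀ) = A * Aᵀ := by
      rw [Matrix.mul_assoc, ← Matrix.mul_assoc Aᵀ A Aᵀ, hA, Matrix.one_mul]
    have hsym : ∀ a b, (A * Aᵀ) a b = (A * Aᵀ) b a := by
      intro a b
      simp only [Matrix.mul_apply, Matrix.transpose_apply]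
      exact Finset.sum_congr rfl fun l _ => mul_comm _ _
    have h1 : ∑ j : Fin N, ((A * Aᵀ) i j) ^ 2 = c i :=
      calc ∑ j : Fin N, ((A * Aᵀ) i j) ^ 2 = ((A * Aᵀ) * (A * Aᵀ)) i i := by
            rw [Matrix.mul_apply]
            exact Finset.sum_congr rfl fun j _ => by rw [sq, hsym j i]
        _ = c i := by rw [hB]
    have h2 : (c i) ^ 2 ≤ ∑ j : Fin N, ((A * Aᵀ) i j) ^ 2 := by
      have := Finset.single_le_sum (f := fun j => ((A * Aᵀ) i j) ^ 2)
        (fun j _ => sq_nonneg _) (Finset.mem_univ i)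
      simpa [hcdef] using this
    nlinarith [hc_nonneg i]
  have hc_sum : ∑ i : Fin N, c i = (k : ℝ) := by
    have h := Matrix.trace_mul_comm A Aᵀ
    rw [hA, Matrix.trace_one] at h
    simpa [Matrix.trace, Matrix.diag, hcdef] using h
  have hσsq : ∀ i j : ℕ, i ≤ j → σ j ^ 2 ≤ σ i ^ 2 := by
    intro i j hij
    have := hσ_dec i j hij
    nlinarith [hσ_nonneg j, hσ_nonneg i]
  set e : Fin N → ℝ := fun i => if (i : ℕ) < k then σ i ^ 2 else 0 with hedef
  set t : Fin N → ℝ := fun i => if (i : ℕ) < k then 1 else 0 with htdef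
  have ht_sum : ∑ i : Fin N, t i = (k : ℝ) := by
    rw [htdef, Fin.sum_univ_eq_sum_range (fun i => if i < k then (1:ℝ) else 0),
      sum_range_if hkN]
    simp
  have he_sum : ∑ i : Fin N, e i = ∑ i ∈ Finset.range k, σ i ^ 2 := by
    rw [hedef, Fin.sum_univ_eq_sum_range (fun i => if i < k then σ i ^ 2 else 0),
      sum_range_if hkN]
  have hkey : ∑ i : Fin N, c i * d i ≤ ∑ i ∈ Finset.range k, σ i ^ 2 := by
    have hterm : ∀ i : Fin N, c i * d i ≤ e i + σ k ^ 2 * (c i - t i) := by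
      intro i
      by_cases hik : (i : ℕ) < k
      · have hiM : (i : ℕ) < M := hik.trans_le (hk.trans hmM)
        simp only [hddef, hedef, htdef, if_pos hik, if_pos hiM]
        have h1 : σ k ^ 2 ≤ σ (i : ℕ) ^ 2 := hσsq _ _ hik.le
        nlinarith [hc_le_one i, hc_nonneg i]
      · simp only [hddef, hedef, htdef, if_neg hik]
        have hdle : (if (i : ℕ) < M then σ (i:ℕ) ^ 2 else 0) ≤ σ k ^ 2 := by
          by_cases hiM : (i : ℕ) < M
          · simp only [if_pos hiM]
            exact hσsq _ _ (not_lt.mp hik)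
          · simp only [if_neg hiM]
            positivity
        have := hc_nonneg i
        nlinarith
    calc ∑ i : Fin N, c i * d i ≤ ∑ i : Fin N, (e i + σ k ^ 2 * (c i - t i)) :=
          Finset.sum_le_sum fun i _ => hterm i
      _ = ∑ i : Fin N, e i + σ k ^ 2 * (∑ i : Fin N, c i - ∑ i : Fin N, t i) := by
          rw [Finset.sum_add_distrib, ← Finset.mul_sum, Finset.sum_sub_distrib]
      _ = ∑ i ∈ Finset.range k, σ i ^ 2 := by
          rw [he_sum, hc_sum, ht_sum]; ring
  have hd_sum : ∑ i : Fin N, d i = ∑ i ∈ Finset.range m, σ i ^ 2 := by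
    rw [hddef, Fin.sum_univ_eq_sum_range (fun i => if i < M then σ i ^ 2 else 0)]
    have hcong : ∀ i ∈ Finset.range N, (if i < M then σ i ^ 2 else 0)
        = (if i < m then σ i ^ 2 else 0) := by
      intro i hi
      have hiN := Finset.mem_range.mp hi
      by_cases h : i < M
      · rw [if_pos h, if_pos (by omega)]
      · rw [if_neg h, if_neg (by omega)]
    rw [Finset.sum_congr rfl hcong, sum_range_if hmN]
  -- assemble
  have hexp : (U - Q * Qᵀ * U)ᵀ * (U - Q * Qᵀ * U) = Uᵀ * U - (Qᵀ * U)ᵀ * (Qᵀ * U) := by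
    simp only [Matrix.transpose_sub, Matrix.transpose_mul, Matrix.transpose_transpose,
      Matrix.sub_mul, Matrix.mul_sub, Matrix.mul_assoc]
    rw [show Qᵀ * (Q * (Qᵀ * U)) = Qᵀ * U from by
      rw [← Matrix.mul_assoc, hQ, Matrix.one_mul]]
    abel
  have hAT : Aᵀ = Qᵀ * V := by
    rw [hAdef, Matrix.transpose_mul, Matrix.transpose_transpose]
  have hU1 : Matrix.trace (Uᵀ * U) = ∑ i ∈ Finset.range m, σ i ^ 2 := by
    rw [hSVD, Matrix.mul_assoc, fro_left V hV,
      fro_right Wᵀ (by rwa [Matrix.transpose_transpose]) S,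
      Matrix.trace_mul_comm, htrS, hd_sum]
  have hU2 : Matrix.trace ((Qᵀ * U)ᵀ * (Qᵀ * U)) = ∑ i : Fin N, c i * d i := by
    have h1 : Qᵀ * U = (Aᵀ * S) * Wᵀ := by
      rw [hSVD, hAT, ← Matrix.mul_assoc, ← Matrix.mul_assoc]
    rw [h1, fro_right Wᵀ (by rwa [Matrix.transpose_transpose]) (Aᵀ * S)]
    rw [Matrix.transpose_mul, Matrix.transpose_transpose]
    rw [show Sᵀ * A * (Aᵀ * S) = Sᵀ * (A * Aᵀ) * S from by
      rw [Matrix.mul_assoc Sᵀ A (Aᵀ * S), ← Matrix.mul_assoc A Aᵀ S,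
        ← Matrix.mul_assoc Sᵀ (A * Aᵀ) S]]
    rw [Matrix.trace_mul_cycle, Matrix.trace_mul_comm, htr_cd]
  rw [fro_eq, hexp, Matrix.trace_sub, hU1, hU2]
  have hsplit : ∑ i ∈ Finset.range k, σ i ^ 2 + ∑ i ∈ Finset.Ico k m, σ i ^ 2
      = ∑ i ∈ Finset.range m, σ i ^ 2 := by
    rw [Finset.range_eq_Ico, Finset.range_eq_Ico]
    exact Finset.sum_Ico_consecutive (fun i => σ i ^ 2) (Nat.zero_le k) hk
  linarith [hkey]
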